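/- For all nonnegative integers n, p and real x, λ, the truncated degenerate modified Bell polynomial satisfies B^{(p)}_{n,λ}(x) = Σ_{k=0}^{n} S_{2,λ}(n, k | x) / C(k+p, p). -/

import Mathlib

open Finset

def degFall (l x : ℝ) (n : ℕ) : ℝ := ∏ i ∈ Finset.range n, (x - i * l)

def fall (x : ℝ) (n : ℕ) : ℝ := ∏ i ∈ Finset.range n, (x - i)

/-- The degenerate exponential `e_λ^x(t)` as a formal power series over ℝ. -/
noncomputable def degExpPS (l x : ℝ) : PowerSeries ℝ :=
  PowerSeries.mk fun n => degFall l x n / (n.factorial : ℝ)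

lemma degFall_succ (l a : ℝ) (n : ℕ) :
    degFall l a (n + 1) = degFall l a n * (a - n * l) := Finset.prod_range_succ _ _

@[simp] lemma degFall_zero' (l a : ℝ) : degFall l a 0 = 1 := by simp [degFall]

lemma fall_nat (j k : ℕ) : fall (j : ℝ) k = (j.descFactorial k : ℝ) := by
  rcases le_or_gt k j with h | h
  · rw [fall, Nat.descFactorial_eq_prod_range, Nat.cast_prod]
    refine Finset.prod_congr rfl fun i hi => ?_
    rw [Finset.mem_range] at hi
    have hij : i ≤ j := le_trans (Nat.le_of_lt hi) h
    rw [Nat.cast_sub hij]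
  · rw [Nat.descFactorial_eq_zero_iff_lt.2 h, Nat.cast_zero]
    exact Finset.prod_eq_zero (Finset.mem_range.2 h) (by simp)

lemma fall_zero_of_lt (j k : ℕ) (h : j < k) : fall (j : ℝ) k = 0 :=
  Finset.prod_eq_zero (Finset.mem_range.2 h) (by simp)

lemma fall_eq_choose (j k : ℕ) :
    fall (j : ℝ) k = (k.factorial : ℝ) * (j.choose k : ℝ) := by
  rw [fall_nat, Nat.descFactorial_eq_factorial_mul_choose]; push_cast; ring

lemma degFall_add (l a b : ℝ) (n : ℕ) :
    degFall l (a + b) n =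
      ∑ j ∈ Finset.range (n + 1),
        (n.choose j : ℝ) * degFall l a j * degFall l b (n - j) := by
  induction n with
  | zero => simp
  | succ n ih =>
    rw [degFall_succ, ih, Finset.sum_mul]
    have hsplit : ∀ j ∈ Finset.range (n + 1),
        (n.choose j : ℝ) * degFall l a j * degFall l b (n - j) * (a + b - n * l)
        = (n.choose j : ℝ) * degFall l a (j + 1) * degFall l b (n - j)
          + (n.choose j : ℝ) * degFall l a j * degFall l b (n + 1 - j) := by
      intro j hj
      rw [Finset.mem_range, Nat.lt_succ_iff] at hj
      have h2 : degFall l b (n + 1 - j) = degFall l b (n - j) * (b - ((n - j : ℕ) : ℝ) * l) := by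
        rw [show n + 1 - j = (n - j) + 1 by omega]; exact Finset.prod_range_succ _ _
      have hc : ((n - j : ℕ) : ℝ) = (n : ℝ) - j := by rw [Nat.cast_sub hj]
      rw [degFall_succ, h2, hc]; ring
    rw [Finset.sum_congr rfl hsplit, Finset.sum_add_distrib]
    rw [Finset.sum_range_succ' (fun j =>
      ((n + 1).choose j : ℝ) * degFall l a j * degFall l b (n + 1 - j)) (n + 1)]
    simp only [Nat.choose_succ_succ, Nat.succ_sub_succ, Nat.cast_add, Nat.choose_zero_right,
      Nat.cast_one, Nat.sub_zero, degFall_zero', one_mul, mul_one]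
    have e1 : ∑ j ∈ Finset.range (n + 1),
        ((n.choose j : ℝ) + (n.choose (j + 1) : ℝ)) * degFall l a (j + 1) * degFall l b (n - j)
      = (∑ j ∈ Finset.range (n + 1), (n.choose j : ℝ) * degFall l a (j + 1) * degFall l b (n - j))
      + ∑ j ∈ Finset.range (n + 1), (n.choose (j + 1) : ℝ) * degFall l a (j + 1) * degFall l b (n - j) := by
      rw [← Finset.sum_add_distrib]; exact Finset.sum_congr rfl fun j _ => by ring
    have e2 : ∑ j ∈ Finset.range (n + 1),
        (n.choose (j + 1) : ℝ) * degFall l a (j + 1) * degFall l b (n - j)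
      = ∑ j ∈ Finset.range n, (n.choose (j + 1) : ℝ) * degFall l a (j + 1) * degFall l b (n - j) := by
      rw [Finset.sum_range_succ, Nat.choose_succ_self]; simp
    have e3 : ∑ j ∈ Finset.range (n + 1), (n.choose j : ℝ) * degFall l a j * degFall l b (n + 1 - j)
      = (∑ j ∈ Finset.range n, (n.choose (j + 1) : ℝ) * degFall l a (j + 1) * degFall l b (n - j))
      + degFall l b (n + 1) := by
      rw [Finset.sum_range_succ' _ n]
      simp [Nat.succ_sub_succ]
    rw [e1, e2, e3]; ring

lemma degExpPS_coeff (l a : ℝ) (m : ℕ) :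
    PowerSeries.coeff m (degExpPS l a) = degFall l a m / (m.factorial : ℝ) :=
  PowerSeries.coeff_mk _ _

lemma degExpPS_mul (l a b : ℝ) : degExpPS l (a + b) = degExpPS l a * degExpPS l b := by
  ext m
  rw [PowerSeries.coeff_mul, Finset.Nat.sum_antidiagonal_eq_sum_range_succ_mk,
    degExpPS_coeff, degFall_add, Finset.sum_div]
  refine Finset.sum_congr rfl fun k hk => ?_
  rw [Finset.mem_range, Nat.lt_succ_iff] at hk
  rw [degExpPS_coeff, degExpPS_coeff]
  have hm : (m.factorial : ℝ) = (m.choose k : ℝ) * (k.factorial : ℝ) * ((m - k).factorial : ℝ) := by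
    exact_mod_cast (Nat.choose_mul_factorial_mul_factorial hk).symm
  rw [hm]
  have h1 : (k.factorial : ℝ) ≠ 0 := Nat.cast_ne_zero.2 k.factorial_ne_zero
  have h2 : ((m - k).factorial : ℝ) ≠ 0 := Nat.cast_ne_zero.2 (m - k).factorial_ne_zero
  have h3 : (m.choose k : ℝ) ≠ 0 := Nat.cast_ne_zero.2 (Nat.choose_pos hk).ne'
  field_simp

lemma degExpPS_zero_x (l : ℝ) : degExpPS l 0 = 1 := by
  ext m
  cases m with
  | zero => simp [degExpPS_coeff]
  | succ m =>
    rw [degExpPS_coeff]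
    have : degFall l 0 (m + 1) = 0 :=
      Finset.prod_eq_zero (Finset.mem_range.2 (Nat.succ_pos m)) (by simp)
    simp [this]

lemma degExpPS_nat_add (l x : ℝ) (N : ℕ) :
    degExpPS l ((N : ℝ) + x) = (degExpPS l 1) ^ N * degExpPS l x := by
  induction N with
  | zero => simp
  | succ N ih =>
    have h : ((N + 1 : ℕ) : ℝ) + x = 1 + ((N : ℝ) + x) := by push_cast; ring
    rw [h, degExpPS_mul, ih, pow_succ]
    ring

lemma coeff_vanish (l x : ℝ) (k m : ℕ) (h : m < k) :
    PowerSeries.coeff m ((degExpPS l 1 - 1) ^ k * degExpPS l x) = 0 := by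
  have h0 : PowerSeries.constantCoeff (degExpPS l 1 - 1) = 0 := by
    rw [map_sub, ← PowerSeries.coeff_zero_eq_constantCoeff_apply,
      ← PowerSeries.coeff_zero_eq_constantCoeff_apply, degExpPS, PowerSeries.coeff_mk,
      PowerSeries.coeff_zero_one]
    simp
  have hX : (PowerSeries.X : PowerSeries ℝ) ∣ degExpPS l 1 - 1 := PowerSeries.X_dvd_iff.mpr h0
  have hd : (PowerSeries.X : PowerSeries ℝ) ^ k ∣ (degExpPS l 1 - 1) ^ k * degExpPS l x :=
    Dvd.dvd.mul_right (pow_dvd_pow_of_dvd hX k) _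
  exact PowerSeries.X_pow_dvd_iff.mp hd m h

lemma key (l x : ℝ) (m j : ℕ) :
    degFall l ((j : ℝ) + x) m = ∑ k ∈ Finset.range (m + 1),
      ((m.factorial : ℝ) * PowerSeries.coeff m ((degExpPS l 1 - 1) ^ k * degExpPS l x)
        / (k.factorial : ℝ)) * fall (j : ℝ) k := by
  set c : ℕ → ℝ := fun k => PowerSeries.coeff m ((degExpPS l 1 - 1) ^ k * degExpPS l x) with hc
  have hE : (degExpPS l 1) ^ j = ∑ k ∈ Finset.range (j + 1),
      (degExpPS l 1 - 1) ^ k * PowerSeries.C ((j.choose k : ℕ) : ℝ) := by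
    have h := add_pow (degExpPS l 1 - 1) 1 j
    simp only [sub_add_cancel, one_pow, mul_one] at h
    rw [h]
    exact Finset.sum_congr rfl fun k _ => by rw [map_natCast (PowerSeries.C (R := ℝ))]
  have hL : degFall l ((j : ℝ) + x) m
      = (m.factorial : ℝ) * ∑ k ∈ Finset.range (j + 1), (j.choose k : ℝ) * c k := by
    have h1 : degFall l ((j : ℝ) + x) m
        = (m.factorial : ℝ) * PowerSeries.coeff m (degExpPS l ((j : ℝ) + x)) := by
      rw [degExpPS_coeff]
      field_simp
    rw [h1, degExpPS_nat_add, hE, Finset.sum_mul]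
    simp only [map_sum]
    rw [Finset.mul_sum, Finset.mul_sum]
    congr 1
    funext k
    have h2 : (degExpPS l 1 - 1) ^ k * PowerSeries.C ((j.choose k : ℕ) : ℝ) * degExpPS l x
        = ((degExpPS l 1 - 1) ^ k * degExpPS l x) * PowerSeries.C ((j.choose k : ℕ) : ℝ) := by
      ring
    rw [h2, PowerSeries.coeff_mul_C, hc]
    ring
  rw [hL]
  have hterm : ∀ k, ((m.factorial : ℝ) * c k / (k.factorial : ℝ)) * fall (j : ℝ) k
      = (j.choose k : ℝ) * c k * (m.factorial : ℝ) := by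
    intro k
    rw [fall_eq_choose]
    have hk0 : (k.factorial : ℝ) ≠ 0 := Nat.cast_ne_zero.2 k.factorial_ne_zero
    field_simp
  rw [Finset.sum_congr rfl fun k _ => hterm k]
  rw [← Finset.sum_mul]
  rw [mul_comm]
  congr 1
  have e1 : ∑ k ∈ Finset.range (j + 1), (j.choose k : ℝ) * c k
      = ∑ k ∈ Finset.range (j + m + 1), (j.choose k : ℝ) * c k := by
    refine Finset.sum_subset (by intro a ha; rw [Finset.mem_range] at *; omega) ?_
    intro k _ hk
    rw [Finset.mem_range] at hk
    rw [Nat.choose_eq_zero_of_lt (by omega)]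
    simp
  have e2 : ∑ k ∈ Finset.range (m + 1), (j.choose k : ℝ) * c k
      = ∑ k ∈ Finset.range (j + m + 1), (j.choose k : ℝ) * c k := by
    refine Finset.sum_subset (by intro a ha; rw [Finset.mem_range] at *; omega) ?_
    intro k _ hk
    rw [Finset.mem_range] at hk
    have hck : c k = 0 := coeff_vanish l x k m (by omega)
    rw [hck, mul_zero]
  rw [e1, ← e2]

lemma tri (m : ℕ) (d : ℕ → ℝ)
    (h : ∀ j : ℕ, j ≤ m → ∑ k ∈ Finset.range (m + 1), d k * fall (j : ℝ) k = 0) :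
    ∀ k, k ≤ m → d k = 0 := by
  intro k
  induction k using Nat.strong_induction_on with
  | _ k ih =>
    intro hk
    have h0 := h k hk
    have hsum : ∀ i ∈ Finset.range (m + 1),
        d i * fall (k : ℝ) i = if i = k then d k * (k.factorial : ℝ) else 0 := by
      intro i hi
      rw [Finset.mem_range, Nat.lt_succ_iff] at hi
      rcases lt_trichotomy i k with hlt | heq | hgt
      · rw [ih i hlt (le_trans hlt.le hk), if_neg hlt.ne, zero_mul]
      · subst heq
        rw [if_pos rfl, fall_eq_choose, Nat.choose_self, Nat.cast_one, mul_one]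
      · rw [fall_zero_of_lt k i hgt, if_neg hgt.ne', mul_zero]
    rw [Finset.sum_congr rfl hsum, Finset.sum_ite_eq' (Finset.range (m + 1)) k,
      if_pos (Finset.mem_range.2 (Nat.lt_succ_of_le hk))] at h0
    have hkf : (k.factorial : ℝ) ≠ 0 := Nat.cast_ne_zero.2 k.factorial_ne_zero
    exact (mul_eq_zero.mp h0).resolve_right hkf

theorem truncated_degenerate_modified_Bell_explicit
    (l x : ℝ) (n p : ℕ)
    (S2x : ℕ → ℕ → ℝ)
    (hSx : ∀ (y : ℝ) (m : ℕ),
      degFall l (y + x) m = ∑ k ∈ Finset.range (m + 1), S2x m k * fall y k)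
    (B : ℕ → ℝ)
    (hB : ∀ m : ℕ,
      (∑' k : ℕ, (p.factorial : ℝ) / ((k + p).factorial : ℝ) *
        PowerSeries.coeff m (((degExpPS l 1 - 1) ^ k) * degExpPS l x))
        = B m / (m.factorial : ℝ)) :
    B n = ∑ k ∈ Finset.range (n + 1), S2x n k / (((k + p).choose p : ℕ) : ℝ) := by
  classical
  have hTS : ∀ k, k ≤ n → S2x n k = (n.factorial : ℝ) *
      PowerSeries.coeff n ((degExpPS l 1 - 1) ^ k * degExpPS l x) / (k.factorial : ℝ) := by
    intro k hk
    have htri := tri n (fun k => S2x n k - (n.factorial : ℝ) *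
        PowerSeries.coeff n ((degExpPS l 1 - 1) ^ k * degExpPS l x) / (k.factorial : ℝ))
      (fun j _ => by
        simp only [sub_mul]
        rw [Finset.sum_sub_distrib, ← hSx (j : ℝ) n, ← key l x n j, sub_self]) k hk
    linarith
  have hsupp : ∀ k ∉ Finset.range (n + 1),
      (p.factorial : ℝ) / ((k + p).factorial : ℝ) *
        PowerSeries.coeff n ((degExpPS l 1 - 1) ^ k * degExpPS l x) = 0 := by
    intro k hk
    rw [Finset.mem_range] at hk
    rw [coeff_vanish l x k n (by omega), mul_zero]
  have hBn := hB n
  rw [tsum_eq_sum hsupp] at hBn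
  have hnf : (n.factorial : ℝ) ≠ 0 := Nat.cast_ne_zero.2 n.factorial_ne_zero
  have hBn' : B n = (∑ k ∈ Finset.range (n + 1),
      (p.factorial : ℝ) / ((k + p).factorial : ℝ) *
        PowerSeries.coeff n ((degExpPS l 1 - 1) ^ k * degExpPS l x)) * (n.factorial : ℝ) := by
    rw [hBn]
    field_simp
  rw [hBn', Finset.sum_mul]
  refine Finset.sum_congr rfl fun k hk => ?_
  rw [Finset.mem_range, Nat.lt_succ_iff] at hk
  rw [hTS k hk]
  have hfac : ((k + p).factorial : ℝ)
      = ((k + p).choose p : ℝ) * (p.factorial : ℝ) * (k.factorial : ℝ) := by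
    have h := Nat.choose_mul_factorial_mul_factorial (Nat.le_add_left p k)
    rw [Nat.add_sub_cancel] at h
    exact_mod_cast h.symm
  have hch : (((k + p).choose p : ℕ) : ℝ) ≠ 0 :=
    Nat.cast_ne_zero.2 (Nat.choose_pos (Nat.le_add_left p k)).ne'
  have hkf : (k.factorial : ℝ) ≠ 0 := Nat.cast_ne_zero.2 k.factorial_ne_zero
  have hpf : (p.factorial : ℝ) ≠ 0 := Nat.cast_ne_zero.2 p.factorial_ne_zero
  rw [hfac]
  field_simp
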